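/- The Riesz potential of ρ of order σ vanishes at infinity in the essential sense: for every ε > 0 there exists M > 0 such that ∫_{ℝ^N} ρ(y) |x−y|^{σ−N} dy < ε for almost every x ∈ ℝ^N with |x| > M. -/

import Mathlib

open MeasureTheory Real Filter Metric Set Module Pointwise
open scoped ENNReal

section Aux
variable {E : Type*} [NormedAddCommGroup E] [NormedSpace ℝ E] [FiniteDimensional ℝ E]
  [MeasurableSpace E] [BorelSpace E] (μ : Measure E) [μ.IsAddHaarMeasure]

lemma lint_comp_smul (g : E → ℝ≥0∞) (hg : Measurable g) {r : ℝ} (hr : 0 < r) :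
    ∫⁻ z, g z ∂μ = ENNReal.ofReal (r ^ finrank ℝ E) * ∫⁻ y, g (r • y) ∂μ := by
  have h := MeasureTheory.Measure.map_addHaar_smul μ (ne_of_gt hr)
  have h2 : ∫⁻ y, g (r • y) ∂μ = ENNReal.ofReal |((r:ℝ) ^ finrank ℝ E)⁻¹| * ∫⁻ z, g z ∂μ := by
    rw [← lintegral_map hg (measurable_const_smul r), h, lintegral_smul_measure, smul_eq_mul]
  rw [h2, ← mul_assoc, ← ENNReal.ofReal_mul (by positivity), abs_of_nonneg (by positivity),
    mul_inv_cancel₀ (by positivity), ENNReal.ofReal_one, one_mul]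

lemma lint_rpow_smul_set (p : ℝ) {r : ℝ} (hr : 0 < r) (s : Set E) (hs : MeasurableSet s) :
    ∫⁻ z in r • s, ENNReal.ofReal (‖z‖ ^ p) ∂μ
      = ENNReal.ofReal (r ^ ((finrank ℝ E : ℝ) + p)) * ∫⁻ z in s, ENNReal.ofReal (‖z‖ ^ p) ∂μ := by
  have hseq : r • s = (fun z : E => r⁻¹ • z) ⁻¹' s := by
    ext z; simp [mem_smul_set_iff_inv_smul_mem₀ (ne_of_gt hr)]
  have hsm : MeasurableSet (r • s) := hseq ▸ (measurable_const_smul r⁻¹) hs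
  have hmeas : Measurable fun z : E => ENNReal.ofReal (‖z‖ ^ p) := by fun_prop
  have key := lint_comp_smul μ (g := (r • s).indicator fun z => ENNReal.ofReal (‖z‖ ^ p))
    ((hmeas.indicator hsm)) hr
  rw [lintegral_indicator hsm] at key
  have hind : ∀ y : E, (r • s).indicator (fun z => ENNReal.ofReal (‖z‖ ^ p)) (r • y)
      = ENNReal.ofReal (r ^ p) * s.indicator (fun z => ENNReal.ofReal (‖z‖ ^ p)) y := by
    intro y
    by_cases hy : y ∈ s
    · rw [Set.indicator_of_mem (smul_mem_smul_set hy), Set.indicator_of_mem hy,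
        norm_smul, Real.norm_of_nonneg hr.le, Real.mul_rpow hr.le (norm_nonneg _),
        ENNReal.ofReal_mul (by positivity)]
    · rw [Set.indicator_of_notMem, Set.indicator_of_notMem hy, mul_zero]
      exact fun hmem => hy ((smul_mem_smul_set_iff₀ (ne_of_gt hr) s y).mp hmem)
  simp only [hind] at key
  rw [lintegral_const_mul _ (hmeas.indicator hs), lintegral_indicator hs, ← mul_assoc,
    ← ENNReal.ofReal_mul (by positivity), ← Real.rpow_natCast r, ← Real.rpow_add hr] at key
  exact key

lemma fin_ball {p : ℝ} (hp0 : p < 0) (hpN : -(finrank ℝ E : ℝ) < p) :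
    ∫⁻ z in closedBall (0 : E) 1, ENNReal.ofReal (‖z‖ ^ p) ∂μ < ∞ := by
  have hmeas : Measurable fun z : E => ‖z‖ ^ p := by fun_prop
  have hnn : 0 ≤ᵐ[μ.restrict (closedBall (0 : E) 1)] fun z : E => ‖z‖ ^ p :=
    Filter.Eventually.of_forall fun z => Real.rpow_nonneg (norm_nonneg _) _
  rw [lintegral_eq_lintegral_meas_le _ hnn hmeas.aemeasurable]
  have hbound : ∀ t ∈ Set.Ioi (0:ℝ),
      (μ.restrict (closedBall (0 : E) 1)) {a : E | t ≤ ‖a‖ ^ p}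
        ≤ min (μ (closedBall (0:E) 1)) (ENNReal.ofReal (t ^ ((finrank ℝ E : ℝ) / p)) * μ (ball (0:E) 1)) := by
    intro t ht
    refine le_min ((measure_mono (Set.subset_univ _)).trans_eq (Measure.restrict_apply_univ _)) ?_
    · have hsub : {a : E | t ≤ ‖a‖ ^ p} ⊆ closedBall 0 (t ^ p⁻¹) := by
        intro a ha
        simp only [Set.mem_setOf_eq] at ha
        rw [mem_closedBall_zero_iff]
        have ha0 : a ≠ 0 := by
          rintro rfl
          rw [norm_zero, Real.zero_rpow (ne_of_lt hp0)] at ha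
          exact absurd (lt_of_lt_of_le ht ha) (lt_irrefl 0)
        have hna : 0 < ‖a‖ := norm_pos_iff.mpr ha0
        -- from t ≤ ‖a‖^p with p<0 : ‖a‖ ≤ t^(1/p)
        have hpinv : p⁻¹ ≤ 0 := le_of_lt (inv_lt_zero.mpr hp0)
        have := Real.rpow_le_rpow_of_nonpos ht ha hpinv
        rwa [← Real.rpow_mul (norm_nonneg _), mul_inv_cancel₀ (ne_of_lt hp0),
          Real.rpow_one] at this
      calc (μ.restrict (closedBall (0 : E) 1)) {a : E | t ≤ ‖a‖ ^ p}
          ≤ μ (closedBall (0:E) (t ^ p⁻¹)) :=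
            (Measure.restrict_apply_le _ _).trans (measure_mono hsub)
        _ = ENNReal.ofReal ((t ^ p⁻¹) ^ finrank ℝ E) * μ (ball (0:E) 1) :=
            Measure.addHaar_closedBall μ _ (Real.rpow_nonneg ht.le _)
        _ = ENNReal.ofReal (t ^ ((finrank ℝ E : ℝ) / p)) * μ (ball (0:E) 1) := by
            rw [← Real.rpow_natCast (t ^ p⁻¹), ← Real.rpow_mul ht.le, inv_mul_eq_div]
  set F := fun t : ℝ => (μ.restrict (closedBall (0 : E) 1)) {a : E | t ≤ ‖a‖ ^ p} with hF
  have hNp : ((finrank ℝ E : ℝ)) / p < -1 := by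
    rw [div_lt_iff_of_neg hp0]; linarith
  calc ∫⁻ t in Set.Ioi (0:ℝ), F t
      ≤ ∫⁻ t in Set.Ioc (0:ℝ) 1 ∪ Set.Ioi 1, F t :=
        lintegral_mono_set Set.Ioi_subset_Ioc_union_Ioi
    _ ≤ (∫⁻ t in Set.Ioc (0:ℝ) 1, F t) + ∫⁻ t in Set.Ioi (1:ℝ), F t :=
        lintegral_union_le _ _ _
    _ < ∞ := by
        refine ENNReal.add_lt_top.2 ⟨?_, ?_⟩
        · have h1 : ∀ t ∈ Set.Ioc (0:ℝ) 1, F t ≤ μ (closedBall (0:E) 1) := fun t ht =>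
            ((hbound t ht.1).trans (min_le_left _ _))
          refine lt_of_le_of_lt (setLIntegral_mono' measurableSet_Ioc h1) ?_
          rw [setLIntegral_const]
          exact ENNReal.mul_lt_top measure_closedBall_lt_top (by simp)
        · have h2 : ∀ t ∈ Set.Ioi (1:ℝ), F t ≤
              ENNReal.ofReal (t ^ ((finrank ℝ E : ℝ) / p)) * μ (ball (0:E) 1) := fun t ht =>
            ((hbound t (Set.mem_Ioi.mpr (lt_trans one_pos (Set.mem_Ioi.mp ht)))).trans (min_le_right _ _))
          refine lt_of_le_of_lt (setLIntegral_mono' measurableSet_Ioi h2) ?_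
          rw [lintegral_mul_const' _ _ measure_ball_lt_top.ne]
          exact ENNReal.mul_lt_top
            (IntegrableOn.setLIntegral_lt_top (integrableOn_Ioi_rpow_of_lt hNp one_pos))
            measure_ball_lt_top

lemma fin_compl {q : ℝ} (hq : q < -(finrank ℝ E : ℝ)) :
    ∫⁻ z in (closedBall (0 : E) 1)ᶜ, ENNReal.ofReal (‖z‖ ^ q) ∂μ < ∞ := by
  have hq0 : q < 0 := lt_of_lt_of_le hq (neg_nonpos.mpr (Nat.cast_nonneg _))
  have hptw : ∀ z ∈ (closedBall (0 : E) 1)ᶜ,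
      ENNReal.ofReal (‖z‖ ^ q) ≤ ENNReal.ofReal ((2:ℝ) ^ (-q) * (1 + ‖z‖) ^ q) := by
    intro z hz
    rw [Set.mem_compl_iff, mem_closedBall_zero_iff, not_le] at hz
    have hz0 : (0:ℝ) < ‖z‖ := lt_trans one_pos hz
    refine ENNReal.ofReal_le_ofReal ?_
    have h12 : (1:ℝ) + ‖z‖ ≤ 2 * ‖z‖ := by linarith
    have := Real.rpow_le_rpow_of_nonpos (by linarith) h12 hq0.le
    -- this : (2 * ‖z‖)^q ≤ (1+‖z‖)^q
    rw [Real.mul_rpow (by norm_num) hz0.le] at this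
    calc ‖z‖ ^ q = (2:ℝ) ^ (-q) * ((2:ℝ) ^ q * ‖z‖ ^ q) := by
          rw [← mul_assoc, ← Real.rpow_add two_pos, neg_add_cancel, Real.rpow_zero, one_mul]
      _ ≤ (2:ℝ) ^ (-q) * (1 + ‖z‖) ^ q := by
          exact mul_le_mul_of_nonneg_left this (Real.rpow_nonneg (by norm_num) _)
  refine lt_of_le_of_lt (setLIntegral_mono' measurableSet_closedBall.compl hptw) ?_
  have hsplit : ∀ z : E, ENNReal.ofReal ((2:ℝ) ^ (-q) * (1 + ‖z‖) ^ q)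
      = ENNReal.ofReal ((2:ℝ) ^ (-q)) * ENNReal.ofReal ((1 + ‖z‖) ^ (-(-q))) := by
    intro z; rw [neg_neg, ENNReal.ofReal_mul (Real.rpow_nonneg (by norm_num) _)]
  simp only [hsplit]
  rw [lintegral_const_mul' _ _ ENNReal.ofReal_ne_top]
  refine ENNReal.mul_lt_top ENNReal.ofReal_lt_top ?_
  refine lt_of_le_of_lt (lintegral_mono_set (Set.subset_univ _)) ?_
  rw [Measure.restrict_univ]
  exact finite_integral_one_add_norm (by linarith)

lemma tendsto_aux2 {e₁ e₂ : ℝ} (h : e₁ + e₂ < 0) {a₁ a₂ : ℝ} (h₁ : 0 < a₁) (h₂ : 0 < a₂) (b : ℝ) :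
    Tendsto (fun R : ℝ => b * ((a₁*R)^e₁ * (a₂*R)^e₂)) atTop (nhds 0) := by
  have hev : ∀ᶠ R in atTop, (b * (a₁^e₁ * a₂^e₂)) * R^(e₁+e₂) = b * ((a₁*R)^e₁ * (a₂*R)^e₂) := by
    filter_upwards [eventually_gt_atTop 0] with R hR
    rw [Real.mul_rpow h₁.le hR.le, Real.mul_rpow h₂.le hR.le, Real.rpow_add hR]; ring
  refine Tendsto.congr' hev ?_
  have := (tendsto_rpow_neg_atTop (show 0 < -(e₁+e₂) by linarith)).const_mul (b * (a₁^e₁*a₂^e₂))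
  simpa [neg_neg] using this

lemma tendsto_aux1 {e : ℝ} (h : e < 0) {a : ℝ} (ha : 0 < a) (b : ℝ) :
    Tendsto (fun R : ℝ => b * (a*R)^e) atTop (nhds 0) := by
  have := tendsto_aux2 (e₁ := e) (e₂ := 0) (by linarith) ha one_pos b
  simpa [Real.rpow_zero] using this

lemma main_aux (N : ℕ) (hfr : finrank ℝ E = N)
    (hN : 2 ≤ N) (σ : ℝ) (hσ0 : 0 < σ) (hσ2 : σ < 2)
    (ρ : E → ℝ) (hρc : Continuous ρ)
    (hρpos : ∀ x, 0 < ρ x)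
    (Ccheck Rcheck α : ℝ) (hC : 0 < Ccheck) (hR : 0 < Rcheck) (hα : σ < α)
    (hdecay : ∀ x : E, Rcheck ≤ ‖x‖ → ρ x ≤ Ccheck * ‖x‖ ^ (-α)) :
    ∀ ε > (0 : ℝ), ∃ M > (0 : ℝ), ∀ x : E,
      M < ‖x‖ →
      (∫⁻ y : E, ENNReal.ofReal (ρ y * ‖x - y‖ ^ (σ - (N : ℝ))) ∂μ)
        < ENNReal.ofReal ε := by
  intro ε hε
  have hN2 : (2:ℝ) ≤ (N:ℝ) := by exact_mod_cast hN
  have hσN : σ - (N:ℝ) < 0 := by linarith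
  set α' : ℝ := min α ((σ + N)/2) with hα'def
  have hσα' : σ < α' := lt_min hα (by linarith)
  have hα'N : α' < N := lt_of_le_of_lt (min_le_right _ _) (by linarith)
  have hα'pos : 0 < α' := lt_trans hσ0 hσα'
  set R' : ℝ := max Rcheck 1 with hR'def
  have hR'1 : (1:ℝ) ≤ R' := le_max_right _ _
  have decay' : ∀ y : E, R' ≤ ‖y‖ → ρ y ≤ Ccheck * ‖y‖ ^ (-α') := by
    intro y hy
    refine (hdecay y (le_trans (le_max_left _ _) hy)).trans ?_
    have h1y : (1:ℝ) ≤ ‖y‖ := le_trans hR'1 hy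
    exact mul_le_mul_of_nonneg_left
      (Real.rpow_le_rpow_of_exponent_le h1y (by simp [hα'def, min_le_left α ((σ + N)/2)]))
      hC.le
  -- sup of ρ on the closed ball of radius R'
  obtain ⟨z₀, -, hz₀⟩ := (isCompact_closedBall (0:E) R').exists_isMaxOn
    ⟨0, mem_closedBall_self (by linarith)⟩ hρc.continuousOn
  set C₁ : ℝ := ρ z₀ with hC₁def
  have hC₁pos : 0 < C₁ := hρpos z₀
  -- finite constants
  set Jσ := ∫⁻ z in closedBall (0:E) 1, ENNReal.ofReal (‖z‖ ^ (σ - (N:ℝ))) ∂μ with hJσdef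
  have hJσ : Jσ < ∞ := fin_ball μ hσN (by rw [hfr]; linarith)
  set Jα := ∫⁻ z in closedBall (0:E) 1, ENNReal.ofReal (‖z‖ ^ (-α')) ∂μ with hJαdef
  have hJα : Jα < ∞ := fin_ball μ (by linarith) (by rw [hfr]; linarith)
  set q : ℝ := σ - (N:ℝ) - α' with hqdef
  set Jq := ∫⁻ z in (closedBall (0:E) 1)ᶜ, ENNReal.ofReal (‖z‖ ^ q) ∂μ with hJqdef
  have hJq : Jq < ∞ := fin_compl μ (by rw [hfr]; simp only [hqdef]; linarith)
  set V₁ := μ (closedBall (0:E) R') with hV₁def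
  have hV₁ : V₁ < ∞ := measure_closedBall_lt_top
  -- the bounding function
  set T : ℝ → ℝ := fun R =>
    Ccheck * Jσ.toReal * (2⁻¹*R)^(σ-α') +
    (C₁ * V₁.toReal * (2⁻¹*R)^(σ-(N:ℝ)) +
    (Ccheck * Jα.toReal * ((2⁻¹*R)^(σ-(N:ℝ)) * (2*R)^((N:ℝ)-α')) +
    Ccheck * 2^((N:ℝ)-σ) * Jq.toReal * (2*R)^(σ-α'))) with hTdef
  have hT : Tendsto T atTop (nhds 0) := by
    have h1 := tendsto_aux1 (show σ - α' < 0 by linarith) (show (0:ℝ) < 2⁻¹ by norm_num)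
      (Ccheck * Jσ.toReal)
    have h2 := tendsto_aux1 (show σ - (N:ℝ) < 0 by linarith) (show (0:ℝ) < 2⁻¹ by norm_num)
      (C₁ * V₁.toReal)
    have h3 := tendsto_aux2 (show (σ-(N:ℝ)) + ((N:ℝ)-α') < 0 by linarith)
      (show (0:ℝ) < 2⁻¹ by norm_num) (show (0:ℝ) < 2 by norm_num) (Ccheck * Jα.toReal)
    have h4 := tendsto_aux1 (show σ - α' < 0 by linarith) (show (0:ℝ) < 2 by norm_num)
      (Ccheck * 2^((N:ℝ)-σ) * Jq.toReal)
    have := h1.add (h2.add (h3.add h4))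
    simpa using this
  obtain ⟨M₀, hM₀⟩ := eventually_atTop.mp (hT.eventually_lt_const hε)
  refine ⟨max M₀ (max (2*R') 1), lt_of_lt_of_le one_pos (le_max_of_le_right (le_max_right _ _)), ?_⟩
  intro x hx
  set R : ℝ := ‖x‖ with hRdef
  have hRM₀ : M₀ ≤ R := le_of_lt (lt_of_le_of_lt (le_max_left _ _) hx)
  have hR2R' : 2*R' ≤ R := le_of_lt (lt_of_le_of_lt (le_max_of_le_right (le_max_left _ _)) hx)
  have hR1 : (1:ℝ) < R := lt_of_le_of_lt (le_max_of_le_right (le_max_right _ _)) hx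
  have hRpos : (0:ℝ) < R := lt_trans one_pos hR1
  have hR2pos : (0:ℝ) < 2⁻¹*R := by positivity
  have hR'le : R' ≤ 2⁻¹*R := by linarith

  have hR2Rpos : (0:ℝ) < 2*R := by linarith
  set f : E → ℝ≥0∞ := fun y => ENNReal.ofReal (ρ y * ‖x - y‖ ^ (σ - (N:ℝ))) with hfdef
  set A := closedBall x (2⁻¹*R) with hAdef
  set B₁ := closedBall (0:E) R' with hB₁def
  set B₂ := (ball x (2⁻¹*R))ᶜ ∩ (closedBall (0:E) (2*R) \ ball (0:E) R') with hB₂def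
  set Cs := (closedBall (0:E) (2*R))ᶜ with hCsdef
  have cover : (Set.univ : Set E) ⊆ A ∪ (B₁ ∪ (B₂ ∪ Cs)) := by
    intro y _
    by_cases h1 : y ∈ A
    · exact Or.inl h1
    by_cases h2 : ‖y‖ ≤ R'
    · exact Or.inr (Or.inl (mem_closedBall_zero_iff.mpr h2))
    by_cases h3 : ‖y‖ ≤ 2*R
    · refine Or.inr (Or.inr (Or.inl ⟨fun hball => h1 (ball_subset_closedBall hball), ?_⟩))
      exact ⟨mem_closedBall_zero_iff.mpr h3, fun hb => h2 (le_of_lt (mem_ball_zero_iff.mp hb))⟩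
    · exact Or.inr (Or.inr (Or.inr (fun hc => h3 (mem_closedBall_zero_iff.mp hc))))
  -- Piece A
  have hA : ∫⁻ y in A, f y ∂μ ≤ ENNReal.ofReal (Ccheck * Jσ.toReal * (2⁻¹*R)^(σ-α')) := by
    have step1 : ∀ y ∈ A, f y ≤
        ENNReal.ofReal (Ccheck * (2⁻¹*R)^(-α')) * ENNReal.ofReal (‖x - y‖ ^ (σ-(N:ℝ))) := by
      intro y hy
      rw [hAdef, mem_closedBall, dist_eq_norm] at hy
      have hxy : ‖x - y‖ ≤ 2⁻¹*R := by rwa [norm_sub_rev]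
      have hyn : 2⁻¹*R ≤ ‖y‖ := by
        have := norm_sub_norm_le x y
        rw [← hRdef] at this
        linarith
      have hρy : ρ y ≤ Ccheck * (2⁻¹*R)^(-α') :=
        (decay' y (hR'le.trans hyn)).trans (mul_le_mul_of_nonneg_left
          (Real.rpow_le_rpow_of_nonpos hR2pos hyn (neg_nonpos.mpr hα'pos.le)) hC.le)
      rw [hfdef, ← ENNReal.ofReal_mul (by positivity)]
      exact ENNReal.ofReal_le_ofReal
        (mul_le_mul_of_nonneg_right hρy (Real.rpow_nonneg (norm_nonneg _) _))
    have htrans : ∫⁻ y in closedBall x (2⁻¹*R), ENNReal.ofReal (‖x - y‖ ^ (σ-(N:ℝ))) ∂μ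
        = ∫⁻ z in closedBall (0:E) (2⁻¹*R), ENNReal.ofReal (‖z‖ ^ (σ-(N:ℝ))) ∂μ := by
      have hmp : MeasurePreserving (fun y : E => x - y) μ μ :=
        ⟨measurable_const.sub measurable_id, Measure.map_sub_left_eq_self μ x⟩
      have hemb : MeasurableEmbedding (fun y : E => x - y) :=
        (MeasurableEquiv.subLeft x).measurableEmbedding
      have hpre : (fun y : E => x - y) ⁻¹' (closedBall (0:E) (2⁻¹*R)) = closedBall x (2⁻¹*R) := by
        ext y
        simp [mem_closedBall_zero_iff, mem_closedBall, dist_eq_norm, norm_sub_rev y x]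
      have := hmp.setLIntegral_comp_preimage_emb hemb
        (fun z => ENNReal.ofReal (‖z‖ ^ (σ-(N:ℝ)))) (closedBall (0:E) (2⁻¹*R))
      rw [hpre] at this
      exact this
    have hscale : ∫⁻ z in closedBall (0:E) (2⁻¹*R), ENNReal.ofReal (‖z‖ ^ (σ-(N:ℝ))) ∂μ
        = ENNReal.ofReal ((2⁻¹*R) ^ ((N:ℝ) + (σ-(N:ℝ)))) * Jσ := by
      rw [← smul_unitClosedBall_of_nonneg hR2pos.le,
        lint_rpow_smul_set μ _ hR2pos _ measurableSet_closedBall, hfr, hJσdef]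
    calc ∫⁻ y in A, f y ∂μ
        ≤ ∫⁻ y in A, ENNReal.ofReal (Ccheck * (2⁻¹*R)^(-α'))
            * ENNReal.ofReal (‖x - y‖ ^ (σ-(N:ℝ))) ∂μ :=
          setLIntegral_mono' measurableSet_closedBall step1
      _ = ENNReal.ofReal (Ccheck * (2⁻¹*R)^(-α'))
            * ∫⁻ y in A, ENNReal.ofReal (‖x - y‖ ^ (σ-(N:ℝ))) ∂μ :=
          lintegral_const_mul' _ _ ENNReal.ofReal_ne_top
      _ = ENNReal.ofReal (Ccheck * (2⁻¹*R)^(-α'))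
            * (ENNReal.ofReal ((2⁻¹*R) ^ ((N:ℝ) + (σ-(N:ℝ)))) * Jσ) := by
          rw [hAdef, htrans, hscale]
      _ = ENNReal.ofReal (Ccheck * Jσ.toReal * (2⁻¹*R)^(σ-α')) := by
          rw [← ENNReal.ofReal_toReal hJσ.ne, ← ENNReal.ofReal_mul (by positivity),
            ← ENNReal.ofReal_mul (by positivity)]
          congr 1
          rw [show (N:ℝ) + (σ-(N:ℝ)) = σ by ring, show σ - α' = -α' + σ by ring,
            Real.rpow_add hR2pos, ENNReal.toReal_ofReal ENNReal.toReal_nonneg]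
          ring
  -- Piece B₁
  have hB1 : ∫⁻ y in B₁, f y ∂μ ≤ ENNReal.ofReal (C₁ * V₁.toReal * (2⁻¹*R)^(σ-(N:ℝ))) := by
    have step1 : ∀ y ∈ B₁, f y ≤ ENNReal.ofReal (C₁ * (2⁻¹*R)^(σ-(N:ℝ))) := by
      intro y hy
      have hyR' : ‖y‖ ≤ R' := mem_closedBall_zero_iff.mp hy
      have hρy : ρ y ≤ C₁ := hz₀ hy
      have hxy : 2⁻¹*R ≤ ‖x - y‖ := by
        have := norm_sub_norm_le x y
        rw [← hRdef] at this
        linarith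
      have hpow : ‖x - y‖ ^ (σ-(N:ℝ)) ≤ (2⁻¹*R) ^ (σ-(N:ℝ)) :=
        Real.rpow_le_rpow_of_nonpos hR2pos hxy hσN.le
      exact ENNReal.ofReal_le_ofReal
        (mul_le_mul hρy hpow (Real.rpow_nonneg (norm_nonneg _) _) hC₁pos.le)
    calc ∫⁻ y in B₁, f y ∂μ
        ≤ ∫⁻ _ in B₁, ENNReal.ofReal (C₁ * (2⁻¹*R)^(σ-(N:ℝ))) ∂μ :=
          setLIntegral_mono' measurableSet_closedBall step1
      _ = ENNReal.ofReal (C₁ * (2⁻¹*R)^(σ-(N:ℝ))) * V₁ := setLIntegral_const _ _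
      _ = ENNReal.ofReal (C₁ * V₁.toReal * (2⁻¹*R)^(σ-(N:ℝ))) := by
          rw [← ENNReal.ofReal_toReal hV₁.ne, ← ENNReal.ofReal_mul (by positivity)]
          congr 1
          rw [ENNReal.toReal_ofReal ENNReal.toReal_nonneg]
          ring
  -- Piece B₂
  have hB2 : ∫⁻ y in B₂, f y ∂μ ≤
      ENNReal.ofReal (Ccheck * Jα.toReal * ((2⁻¹*R)^(σ-(N:ℝ)) * (2*R)^((N:ℝ)-α'))) := by
    have hmeasB₂ : MeasurableSet B₂ :=
      measurableSet_ball.compl.inter (measurableSet_closedBall.diff measurableSet_ball)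
    have step1 : ∀ y ∈ B₂, f y ≤
        ENNReal.ofReal (Ccheck * (2⁻¹*R)^(σ-(N:ℝ))) * ENNReal.ofReal (‖y‖ ^ (-α')) := by
      intro y hy
      obtain ⟨hy1, hy2, hy3⟩ := hy
      have hyR' : R' ≤ ‖y‖ := le_of_not_gt (fun hlt => hy3 (mem_ball_zero_iff.mpr hlt))
      have hxy : 2⁻¹*R ≤ ‖x - y‖ := by
        have := le_of_not_gt (fun hlt => hy1 (mem_ball.mpr hlt))
        rwa [dist_eq_norm, norm_sub_rev] at this
      have hρy : ρ y ≤ Ccheck * ‖y‖ ^ (-α') := decay' y hyR'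
      have hpow : ‖x - y‖ ^ (σ-(N:ℝ)) ≤ (2⁻¹*R) ^ (σ-(N:ℝ)) :=
        Real.rpow_le_rpow_of_nonpos hR2pos hxy hσN.le
      rw [hfdef, ← ENNReal.ofReal_mul (by positivity)]
      refine ENNReal.ofReal_le_ofReal ?_
      calc ρ y * ‖x - y‖ ^ (σ-(N:ℝ))
          ≤ (Ccheck * ‖y‖ ^ (-α')) * ((2⁻¹*R) ^ (σ-(N:ℝ))) :=
            mul_le_mul hρy hpow (Real.rpow_nonneg (norm_nonneg _) _) (by positivity)
        _ = Ccheck * (2⁻¹*R)^(σ-(N:ℝ)) * ‖y‖ ^ (-α') := by ring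
    have hscale : ∫⁻ z in closedBall (0:E) (2*R), ENNReal.ofReal (‖z‖ ^ (-α')) ∂μ
        = ENNReal.ofReal ((2*R) ^ ((N:ℝ) + -α')) * Jα := by
      rw [← smul_unitClosedBall_of_nonneg hR2Rpos.le,
        lint_rpow_smul_set μ _ hR2Rpos _ measurableSet_closedBall, hfr, hJαdef]
    calc ∫⁻ y in B₂, f y ∂μ
        ≤ ∫⁻ y in B₂, ENNReal.ofReal (Ccheck * (2⁻¹*R)^(σ-(N:ℝ)))
            * ENNReal.ofReal (‖y‖ ^ (-α')) ∂μ := setLIntegral_mono' hmeasB₂ step1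
      _ = ENNReal.ofReal (Ccheck * (2⁻¹*R)^(σ-(N:ℝ)))
            * ∫⁻ y in B₂, ENNReal.ofReal (‖y‖ ^ (-α')) ∂μ :=
          lintegral_const_mul' _ _ ENNReal.ofReal_ne_top
      _ ≤ ENNReal.ofReal (Ccheck * (2⁻¹*R)^(σ-(N:ℝ)))
            * ∫⁻ z in closedBall (0:E) (2*R), ENNReal.ofReal (‖z‖ ^ (-α')) ∂μ := by
          gcongr
          exact fun y hy => hy.2.1
      _ = ENNReal.ofReal (Ccheck * (2⁻¹*R)^(σ-(N:ℝ)))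
            * (ENNReal.ofReal ((2*R) ^ ((N:ℝ) + -α')) * Jα) := by rw [hscale]
      _ = ENNReal.ofReal (Ccheck * Jα.toReal * ((2⁻¹*R)^(σ-(N:ℝ)) * (2*R)^((N:ℝ)-α'))) := by
          rw [← ENNReal.ofReal_toReal hJα.ne, ← ENNReal.ofReal_mul (by positivity),
            ← ENNReal.ofReal_mul (by positivity)]
          congr 1
          rw [show (N:ℝ) + -α' = (N:ℝ) - α' by ring,
            ENNReal.toReal_ofReal ENNReal.toReal_nonneg]
          ring
  -- Piece C
  have hCs : ∫⁻ y in Cs, f y ∂μ ≤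
      ENNReal.ofReal (Ccheck * 2^((N:ℝ)-σ) * Jq.toReal * (2*R)^(σ-α')) := by
    have step1 : ∀ y ∈ Cs, f y ≤
        ENNReal.ofReal (Ccheck * 2^((N:ℝ)-σ)) * ENNReal.ofReal (‖y‖ ^ q) := by
      intro y hy
      have h2R : 2*R < ‖y‖ := by
        have := (Set.mem_compl_iff _ _).mp hy
        rw [mem_closedBall_zero_iff] at this
        linarith [le_of_not_ge this, not_le.mp this]
      have hy0 : (0:ℝ) < ‖y‖ := by linarith
      have hyR' : R' ≤ ‖y‖ := by linarith
      have hxy : 2⁻¹*‖y‖ ≤ ‖x - y‖ := by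
        have h1 := norm_sub_norm_le y x
        rw [norm_sub_rev y x, ← hRdef] at h1
        linarith
      have hρy : ρ y ≤ Ccheck * ‖y‖ ^ (-α') := decay' y hyR'
      have hpow : ‖x - y‖ ^ (σ-(N:ℝ)) ≤ (2⁻¹*‖y‖) ^ (σ-(N:ℝ)) :=
        Real.rpow_le_rpow_of_nonpos (by positivity) hxy hσN.le
      rw [hfdef, ← ENNReal.ofReal_mul (by positivity)]
      refine ENNReal.ofReal_le_ofReal ?_
      have hsplit : (2⁻¹*‖y‖) ^ (σ-(N:ℝ)) = 2^((N:ℝ)-σ) * ‖y‖^(σ-(N:ℝ)) := by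
        rw [Real.mul_rpow (by norm_num) (norm_nonneg _),
          Real.inv_rpow (by norm_num : (0:ℝ) ≤ 2),
          ← Real.rpow_neg (by norm_num : (0:ℝ) ≤ 2), show -(σ-(N:ℝ)) = (N:ℝ)-σ by ring]
      calc ρ y * ‖x - y‖ ^ (σ-(N:ℝ))
          ≤ (Ccheck * ‖y‖ ^ (-α')) * ((2⁻¹*‖y‖) ^ (σ-(N:ℝ))) :=
            mul_le_mul hρy hpow (Real.rpow_nonneg (norm_nonneg _) _) (by positivity)
        _ = Ccheck * 2^((N:ℝ)-σ) * (‖y‖^(-α') * ‖y‖^(σ-(N:ℝ))) := by rw [hsplit]; ring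
        _ = Ccheck * 2^((N:ℝ)-σ) * ‖y‖ ^ q := by
            rw [← Real.rpow_add hy0, show -α' + (σ-(N:ℝ)) = q by rw [hqdef]; ring]
    have hcompl : (closedBall (0:E) (2*R))ᶜ = (2*R) • (closedBall (0:E) 1)ᶜ := by
      ext y
      rw [mem_smul_set_iff_inv_smul_mem₀ (ne_of_gt hR2Rpos)]
      simp only [Set.mem_compl_iff, mem_closedBall_zero_iff, norm_smul, norm_inv,
        Real.norm_of_nonneg hR2Rpos.le]
      rw [inv_mul_le_iff₀ hR2Rpos, mul_one]
    have hscale : ∫⁻ z in (closedBall (0:E) (2*R))ᶜ, ENNReal.ofReal (‖z‖ ^ q) ∂μ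
        = ENNReal.ofReal ((2*R) ^ ((N:ℝ) + q)) * Jq := by
      rw [hcompl, lint_rpow_smul_set μ _ hR2Rpos _ measurableSet_closedBall.compl, hfr, hJqdef]
    calc ∫⁻ y in Cs, f y ∂μ
        ≤ ∫⁻ y in Cs, ENNReal.ofReal (Ccheck * 2^((N:ℝ)-σ))
            * ENNReal.ofReal (‖y‖ ^ q) ∂μ :=
          setLIntegral_mono' measurableSet_closedBall.compl step1
      _ = ENNReal.ofReal (Ccheck * 2^((N:ℝ)-σ)) * ∫⁻ y in Cs, ENNReal.ofReal (‖y‖ ^ q) ∂μ :=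
          lintegral_const_mul' _ _ ENNReal.ofReal_ne_top
      _ = ENNReal.ofReal (Ccheck * 2^((N:ℝ)-σ))
            * (ENNReal.ofReal ((2*R) ^ ((N:ℝ) + q)) * Jq) := by rw [hCsdef, hscale]
      _ = ENNReal.ofReal (Ccheck * 2^((N:ℝ)-σ) * Jq.toReal * (2*R)^(σ-α')) := by
          rw [← ENNReal.ofReal_toReal hJq.ne, ← ENNReal.ofReal_mul (by positivity),
            ← ENNReal.ofReal_mul (by positivity)]
          congr 1
          rw [show (N:ℝ) + q = σ - α' by rw [hqdef]; ring,
            ENNReal.toReal_ofReal ENNReal.toReal_nonneg]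
          ring
  -- Assemble
  have hTnn1 : (0:ℝ) ≤ Ccheck * Jσ.toReal * (2⁻¹*R)^(σ-α') := by positivity
  have hTnn2 : (0:ℝ) ≤ C₁ * V₁.toReal * (2⁻¹*R)^(σ-(N:ℝ)) := by positivity
  have hTnn3 : (0:ℝ) ≤ Ccheck * Jα.toReal * ((2⁻¹*R)^(σ-(N:ℝ)) * (2*R)^((N:ℝ)-α')) := by
    positivity
  have hTnn4 : (0:ℝ) ≤ Ccheck * 2^((N:ℝ)-σ) * Jq.toReal * (2*R)^(σ-α') := by positivity
  calc ∫⁻ y, f y ∂μ = ∫⁻ y in Set.univ, f y ∂μ := by rw [Measure.restrict_univ]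
    _ ≤ ∫⁻ y in A ∪ (B₁ ∪ (B₂ ∪ Cs)), f y ∂μ := lintegral_mono_set cover
    _ ≤ (∫⁻ y in A, f y ∂μ) + ((∫⁻ y in B₁, f y ∂μ)
          + ((∫⁻ y in B₂, f y ∂μ) + (∫⁻ y in Cs, f y ∂μ))) := by
        refine (lintegral_union_le _ _ _).trans ?_
        gcongr
        refine (lintegral_union_le _ _ _).trans ?_
        gcongr
        exact lintegral_union_le _ _ _
    _ ≤ ENNReal.ofReal (Ccheck * Jσ.toReal * (2⁻¹*R)^(σ-α'))
          + (ENNReal.ofReal (C₁ * V₁.toReal * (2⁻¹*R)^(σ-(N:ℝ)))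
          + (ENNReal.ofReal (Ccheck * Jα.toReal * ((2⁻¹*R)^(σ-(N:ℝ)) * (2*R)^((N:ℝ)-α')))
          + ENNReal.ofReal (Ccheck * 2^((N:ℝ)-σ) * Jq.toReal * (2*R)^(σ-α')))) :=
        add_le_add hA (add_le_add hB1 (add_le_add hB2 hCs))
    _ = ENNReal.ofReal (T R) := by
        rw [hTdef]
        rw [← ENNReal.ofReal_add hTnn3 hTnn4, ← ENNReal.ofReal_add hTnn2 (by positivity),
          ← ENNReal.ofReal_add hTnn1 (by positivity)]
    _ < ENNReal.ofReal ε := (ENNReal.ofReal_lt_ofReal_iff hε).mpr (hM₀ R hRM₀)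


end Aux

/-- The Riesz potential of a fast-decaying density vanishes at infinity in the
essential sense: for every `ε > 0` there is `M > 0` with
`∫_{ℝ^N} ρ(y)|x−y|^{σ−N} dy < ε` for a.e. `x` with `|x| > M`. -/
theorem riesz_potential_vanishes_at_infinity
    (N : ℕ) (hN : 2 ≤ N) (σ : ℝ) (hσ0 : 0 < σ) (hσ2 : σ < 2)
    (ρ : EuclideanSpace ℝ (Fin N) → ℝ) (hρc : Continuous ρ)
    (hρpos : ∀ x, 0 < ρ x)
    (Ccheck Rcheck α : ℝ) (hC : 0 < Ccheck) (hR : 0 < Rcheck) (hα : σ < α)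
    (hdecay : ∀ x : EuclideanSpace ℝ (Fin N), Rcheck ≤ ‖x‖ →
      ρ x ≤ Ccheck * ‖x‖ ^ (-α)) :
    ∀ ε > (0 : ℝ), ∃ M > (0 : ℝ), ∀ᵐ x : EuclideanSpace ℝ (Fin N),
      M < ‖x‖ →
      (∫⁻ y : EuclideanSpace ℝ (Fin N),
          ENNReal.ofReal (ρ y * ‖x - y‖ ^ (σ - (N : ℝ))))
        < ENNReal.ofReal ε := by
  intro ε hε
  obtain ⟨M, hM, h⟩ := main_aux (μ := (volume : Measure (EuclideanSpace ℝ (Fin N)))) N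
    finrank_euclideanSpace_fin hN σ hσ0 hσ2 ρ hρc hρpos Ccheck Rcheck α hC hR hα hdecay ε hε
  exact ⟨M, hM, Filter.Eventually.of_forall h⟩
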